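/- Let M, m, k be positive integers and p a prime such that m ∣ M, pk ∣ M, and the p-adic valuation of k is at least the p-adic valuation of m. Let H be a subgroup of GL₂(ℤ/Mℤ) containing the kernel of the reduction map GL₂(ℤ/Mℤ) → GL₂(ℤ/mℤ). Then the order of the image of H under reduction modulo pk equals the order of the image of H under reduction modulo k, multiplied by p⁴ if p divides k, and multiplied by (p² − 1)(p² − p) if p does not divide k. -/

import Mathlib

open Matrix


section Helpers

lemma isUnit_intCast_iff (n : ℕ) [NeZero n] (z : ℤ) :
    IsUnit ((z : ZMod n)) ↔ IsCoprime z (n : ℤ) := by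
  constructor
  · rintro ⟨u, hu⟩
    have h1 : ((z * ((u⁻¹ : (ZMod n)ˣ) : ZMod n).val - 1 : ℤ) : ZMod n) = 0 := by
      push_cast
      rw [ZMod.natCast_val, ZMod.cast_id, ← hu]
      simp
    rw [ZMod.intCast_zmod_eq_zero_iff_dvd] at h1
    obtain ⟨t, ht⟩ := h1
    exact ⟨(((u⁻¹ : (ZMod n)ˣ) : ZMod n).val : ℤ), -t, by linarith⟩
  · rintro ⟨a, b, hab⟩
    refine IsUnit.of_mul_eq_one (a : ZMod n) ?_
    have := congrArg (fun x : ℤ => (x : ZMod n)) hab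
    push_cast at this
    rw [ZMod.natCast_self] at this
    simpa [mul_comm] using this

lemma detCongr {n : ℤ} {X Y : Matrix (Fin 2) (Fin 2) ℤ}
    (h : ∀ i j, X i j ≡ Y i j [ZMOD n]) : X.det ≡ Y.det [ZMOD n] := by
  rw [Matrix.det_fin_two, Matrix.det_fin_two]
  exact ((h 0 0).mul (h 1 1)).sub ((h 0 1).mul (h 1 0))

lemma coprime_of_modEq {n x y : ℤ} (h : x ≡ y [ZMOD n]) (hx : IsCoprime x n) :
    IsCoprime y n := by
  obtain ⟨t, ht⟩ := Int.ModEq.dvd h.symm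
  have : y = x + n * (-t) := by linarith
  rw [this]
  exact hx.add_mul_left_left (-t)

lemma crtMat (a b : ℕ) (hab : IsCoprime (a : ℤ) (b : ℤ)) (X : Matrix (Fin 2) (Fin 2) ℤ)
    (hX : IsCoprime X.det (a : ℤ)) :
    ∃ Y : Matrix (Fin 2) (Fin 2) ℤ,
      (∀ i j, X i j ≡ Y i j [ZMOD (a : ℤ)]) ∧
      (∀ i j, (1 : Matrix (Fin 2) (Fin 2) ℤ) i j ≡ Y i j [ZMOD (b : ℤ)]) ∧
      IsCoprime Y.det ((a * b : ℕ) : ℤ) := by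
  obtain ⟨u, v, huv⟩ := hab
  set c : ℤ := u * a with hc
  set Y : Matrix (Fin 2) (Fin 2) ℤ := X + c • (1 - X) with hY
  have key1 : ∀ i j, Y i j - X i j = (a : ℤ) * (u * ((1 : Matrix (Fin 2) (Fin 2) ℤ) i j - X i j)) := by
    intro i j
    simp only [hY, hc, Matrix.add_apply, Matrix.smul_apply, Matrix.sub_apply, smul_eq_mul]
    ring
  have key2 : ∀ i j, Y i j - (1 : Matrix (Fin 2) (Fin 2) ℤ) i j
      = (b : ℤ) * (-v * ((1 : Matrix (Fin 2) (Fin 2) ℤ) i j - X i j)) := by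
    intro i j
    simp only [hY, hc, Matrix.add_apply, Matrix.smul_apply, Matrix.sub_apply, smul_eq_mul]
    have : u * (a : ℤ) = 1 - v * b := by linarith
    rw [this]
    ring
  have hmodA : ∀ i j, X i j ≡ Y i j [ZMOD (a : ℤ)] := by
    intro i j
    rw [Int.modEq_iff_dvd, key1]
    exact Dvd.intro _ rfl
  have hmodB : ∀ i j, (1 : Matrix (Fin 2) (Fin 2) ℤ) i j ≡ Y i j [ZMOD (b : ℤ)] := by
    intro i j
    rw [Int.modEq_iff_dvd, key2]
    exact Dvd.intro _ rfl
  refine ⟨Y, hmodA, hmodB, ?_⟩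
  push_cast
  have hdA : IsCoprime Y.det (a : ℤ) := coprime_of_modEq (detCongr hmodA) hX
  have hdB : IsCoprime Y.det (b : ℤ) := by
    refine coprime_of_modEq (detCongr (n := (b : ℤ)) (X := 1) hmodB) ?_
    simpa using isCoprime_one_left (x := (b : ℤ))
  exact hdA.mul_right hdB

noncomputable def glOfInt (n : ℕ) [NeZero n] (Y : Matrix (Fin 2) (Fin 2) ℤ)
    (h : IsCoprime Y.det (n : ℤ)) : GL (Fin 2) (ZMod n) :=
  Matrix.GeneralLinearGroup.mk'' (Y.map (Int.cast : ℤ → ZMod n)) <| by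
    have h2 := (RingHom.map_det (Int.castRingHom (ZMod n)) Y).symm
    simp only [RingHom.mapMatrix_apply] at h2
    rw [show (Int.cast : ℤ → ZMod n) = ⇑(Int.castRingHom (ZMod n)) from rfl, h2]
    exact (isUnit_intCast_iff n _).mpr h

@[simp] lemma glOfInt_val (n : ℕ) [NeZero n] (Y : Matrix (Fin 2) (Fin 2) ℤ)
    (h : IsCoprime Y.det (n : ℤ)) :
    (glOfInt n Y h : Matrix (Fin 2) (Fin 2) (ZMod n)) = Y.map (Int.cast : ℤ → ZMod n) := rfl

lemma mapcast_mapcast (n d : ℕ) (h : d ∣ n) (Y : Matrix (Fin 2) (Fin 2) ℤ) :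
    (Y.map (Int.cast : ℤ → ZMod n)).map (ZMod.castHom h (ZMod d))
      = Y.map (Int.cast : ℤ → ZMod d) := by
  rw [Matrix.map_map]
  ext z
  simp [ZMod.castHom_apply, ZMod.intCast_cast, ZMod.intCast_zmod_cast]

/-- integer lift of a matrix over `ZMod d` -/
def intLift {d : ℕ} (A : Matrix (Fin 2) (Fin 2) (ZMod d)) : Matrix (Fin 2) (Fin 2) ℤ :=
  fun i j => ((A i j).val : ℤ)

lemma intLift_map {d : ℕ} [NeZero d] (A : Matrix (Fin 2) (Fin 2) (ZMod d)) :
    (intLift A).map (Int.cast : ℤ → ZMod d) = A := by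
  ext i j
  simp [intLift, ZMod.natCast_val, ZMod.cast_id]

lemma intLift_det_coprime {d : ℕ} [NeZero d] (x : GL (Fin 2) (ZMod d)) :
    IsCoprime (intLift (x : Matrix (Fin 2) (Fin 2) (ZMod d))).det (d : ℤ) := by
  rw [← isUnit_intCast_iff]
  have h := RingHom.map_det (Int.castRingHom (ZMod d)) (intLift (x : Matrix (Fin 2) (Fin 2) (ZMod d)))
  simp only [RingHom.mapMatrix_apply] at h
  rw [show ((((intLift (x : Matrix (Fin 2) (Fin 2) (ZMod d))).det : ℤ)) : ZMod d)
      = (Int.castRingHom (ZMod d)) (intLift (x : Matrix (Fin 2) (Fin 2) (ZMod d))).det from rfl,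
    h]
  rw [show (intLift (x : Matrix (Fin 2) (Fin 2) (ZMod d))).map ⇑(Int.castRingHom (ZMod d))
      = (intLift (x : Matrix (Fin 2) (Fin 2) (ZMod d))).map (Int.cast : ℤ → ZMod d) from rfl]
  rw [intLift_map]
  exact (Matrix.isUnit_iff_isUnit_det _).mp x.isUnit

lemma map_intCast_eq_of_modEq {d : ℕ} {Y Z : Matrix (Fin 2) (Fin 2) ℤ}
    (h : ∀ i j, Y i j ≡ Z i j [ZMOD (d : ℤ)]) :
    Y.map (Int.cast : ℤ → ZMod d) = Z.map (Int.cast : ℤ → ZMod d) := by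
  ext i j
  simpa [Matrix.map_apply, ZMod.intCast_eq_intCast_iff] using h i j

lemma intLift_one_modEq {d : ℕ} [NeZero d] {n : ℕ} (hdn : d ∣ n)
    (x : GL (Fin 2) (ZMod n)) [NeZero n]
    (hx : Matrix.GeneralLinearGroup.map (n := Fin 2) (ZMod.castHom hdn (ZMod d)) x = 1) :
    ∀ i j, intLift (x : Matrix (Fin 2) (Fin 2) (ZMod n)) i j
      ≡ (1 : Matrix (Fin 2) (Fin 2) ℤ) i j [ZMOD (d : ℤ)] := by
  intro i j
  rw [← ZMod.intCast_eq_intCast_iff]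
  have hval : (x : Matrix (Fin 2) (Fin 2) (ZMod n)).map (ZMod.castHom hdn (ZMod d))
      = (1 : Matrix (Fin 2) (Fin 2) (ZMod d)) := congrArg Units.val hx
  have h2 := congrFun (congrFun hval i) j
  simp only [Matrix.map_apply] at h2
  have h3 : ((intLift (x : Matrix (Fin 2) (Fin 2) (ZMod n)) i j : ℤ) : ZMod d)
      = ZMod.castHom hdn (ZMod d) ((x : Matrix (Fin 2) (Fin 2) (ZMod n)) i j) := by
    simp [intLift, ZMod.castHom_apply, ZMod.natCast_val]
  rw [h3, h2]
  fin_cases i <;> fin_cases j <;> simp [Matrix.one_apply]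

lemma modEq_mul_of_coprime {d e : ℕ} (hde : Nat.Coprime d e) {x y : ℤ}
    (h1 : x ≡ y [ZMOD (d : ℤ)]) (h2 : x ≡ y [ZMOD (e : ℤ)]) :
    x ≡ y [ZMOD ((d * e : ℕ) : ℤ)] := by
  rw [Int.modEq_iff_dvd] at h1 h2 ⊢
  push_cast
  exact (Nat.Coprime.isCoprime hde).mul_dvd h1 h2

lemma card_map_mul_card_ker {G G' : Type*} [Group G] [Group G'] [Finite G]
    (f : G →* G') (K : Subgroup G) (h : f.ker ≤ K) :
    Nat.card K = Nat.card (K.map f) * Nat.card f.ker := by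
  have h1 : Nat.card K = Nat.card (K ⧸ (f.ker.subgroupOf K)) * Nat.card (f.ker.subgroupOf K) :=
    Subgroup.card_eq_card_quotient_mul_card_subgroup _
  have h2 : (f.ker.subgroupOf K) = (f.comp K.subtype).ker := by
    rw [Subgroup.subgroupOf, MonoidHom.comap_ker]
  have h3 : Nat.card (K ⧸ (f.ker.subgroupOf K)) = Nat.card (K.map f) := by
    rw [h2]
    rw [Nat.card_congr (QuotientGroup.quotientKerEquivRange (f.comp K.subtype)).toEquiv]
    congr 1
    rw [MonoidHom.range_comp, Subgroup.range_subtype]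
  have h4 : Nat.card (f.ker.subgroupOf K) = Nat.card f.ker :=
    Nat.card_congr (Subgroup.subgroupOfEquivOfLe h).toEquiv
  rw [h1, h3, h4]

end Helpers

section Lift

/-- The key lifting lemma: an element of `GL₂(ℤ/pk)` that is `1 mod k` lifts to an
element of `GL₂(ℤ/M)` that is `1 mod m`. -/
lemma lift_mod (M m k p : ℕ) (hM : 0 < M) (hm : 0 < m) (hk : 0 < k) (hp : p.Prime)
    (hmM : m ∣ M) (hpkM : p * k ∣ M) (hval : padicValNat p m ≤ padicValNat p k)
    (x : GL (Fin 2) (ZMod (p * k)))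
    (hx : Matrix.GeneralLinearGroup.map (n := Fin 2)
        (ZMod.castHom (dvd_mul_left k p) (ZMod k)) x = 1) :
    ∃ y : GL (Fin 2) (ZMod M),
      Matrix.GeneralLinearGroup.map (n := Fin 2) (ZMod.castHom hpkM (ZMod (p * k))) y = x ∧
      Matrix.GeneralLinearGroup.map (n := Fin 2) (ZMod.castHom hmM (ZMod m)) y = 1 := by
  haveI : NeZero M := ⟨hM.ne'⟩
  haveI : NeZero m := ⟨hm.ne'⟩
  haveI : NeZero k := ⟨hk.ne'⟩
  have hpk : 0 < p * k := Nat.pos_of_dvd_of_pos hpkM hM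
  haveI : NeZero (p * k) := ⟨hpk.ne'⟩
  set a := ordProj[p] M with ha
  set b := ordCompl[p] M with hb
  have hab : a * b = M := Nat.ordProj_mul_ordCompl_eq_self M p
  have hcop : Nat.Coprime a b := Nat.Coprime.pow_left _ (Nat.coprime_ordCompl hp hM.ne')
  set X := intLift (x : Matrix (Fin 2) (Fin 2) (ZMod (p * k))) with hX
  have hXdet : IsCoprime X.det ((p * k : ℕ) : ℤ) := intLift_det_coprime x
  have hXdet_p : IsCoprime X.det (p : ℤ) := by
    refine hXdet.of_isCoprime_of_dvd_right ?_
    push_cast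
    exact Dvd.intro _ rfl
  have hXdet_a : IsCoprime X.det (a : ℤ) := by
    rw [ha]
    push_cast
    exact hXdet_p.pow_right
  obtain ⟨Y, hYX, hY1, hYdet⟩ := crtMat a b (Nat.Coprime.isCoprime hcop) X hXdet_a
  rw [hab] at hYdet
  -- X ≡ 1 mod k
  have hX1 : ∀ i j, X i j ≡ (1 : Matrix (Fin 2) (Fin 2) ℤ) i j [ZMOD (k : ℤ)] :=
    intLift_one_modEq _ x hx
  -- X ≡ Y mod p*k
  have hXY_pk : ∀ i j, X i j ≡ Y i j [ZMOD ((p * k : ℕ) : ℤ)] := by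
    intro i j
    rw [show p * k = ordProj[p] (p * k) * ordCompl[p] (p * k) from
      (Nat.ordProj_mul_ordCompl_eq_self _ p).symm]
    refine modEq_mul_of_coprime (Nat.Coprime.pow_left _ (Nat.coprime_ordCompl hp hpk.ne')) ?_ ?_
    · exact (hYX i j).of_dvd (by
        exact_mod_cast Int.natCast_dvd_natCast.mpr (Nat.ordProj_dvd_ordProj_of_dvd hM.ne' hpkM p))
    · have hdk : ordCompl[p] (p * k) ∣ k :=
        (Nat.coprime_ordCompl hp hpk.ne').symm.dvd_of_dvd_mul_left (Nat.ordCompl_dvd (p * k) p)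
      have hdb : ordCompl[p] (p * k) ∣ b := Nat.ordCompl_dvd_ordCompl_of_dvd hpkM p
      have e1 : X i j ≡ (1 : Matrix (Fin 2) (Fin 2) ℤ) i j [ZMOD ((ordCompl[p] (p * k) : ℕ) : ℤ)] :=
        (hX1 i j).of_dvd (Int.natCast_dvd_natCast.mpr hdk)
      have e2 : (1 : Matrix (Fin 2) (Fin 2) ℤ) i j ≡ Y i j [ZMOD ((ordCompl[p] (p * k) : ℕ) : ℤ)] :=
        (hY1 i j).of_dvd (Int.natCast_dvd_natCast.mpr hdb)
      exact e1.trans e2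
  -- Y ≡ 1 mod m
  have hY1m : ∀ i j, Y i j ≡ (1 : Matrix (Fin 2) (Fin 2) ℤ) i j [ZMOD (m : ℤ)] := by
    intro i j
    rw [show m = ordProj[p] m * ordCompl[p] m from (Nat.ordProj_mul_ordCompl_eq_self _ p).symm]
    refine modEq_mul_of_coprime (Nat.Coprime.pow_left _ (Nat.coprime_ordCompl hp hm.ne')) ?_ ?_
    · have hma : ordProj[p] m ∣ a := Nat.ordProj_dvd_ordProj_of_dvd hM.ne' hmM p
      have hmk : ordProj[p] m ∣ k := by
        have h1 : ordProj[p] m ∣ ordProj[p] k := by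
          apply pow_dvd_pow
          rw [Nat.factorization_def m hp, Nat.factorization_def k hp]
          exact hval
        exact h1.trans (Nat.ordProj_dvd k p)
      have e1 : Y i j ≡ X i j [ZMOD ((ordProj[p] m : ℕ) : ℤ)] :=
        ((hYX i j).symm).of_dvd (Int.natCast_dvd_natCast.mpr hma)
      have e2 : X i j ≡ (1 : Matrix (Fin 2) (Fin 2) ℤ) i j [ZMOD ((ordProj[p] m : ℕ) : ℤ)] :=
        (hX1 i j).of_dvd (Int.natCast_dvd_natCast.mpr hmk)
      exact e1.trans e2
    · have hmb : ordCompl[p] m ∣ b := Nat.ordCompl_dvd_ordCompl_of_dvd hmM p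
      exact ((hY1 i j).symm).of_dvd (Int.natCast_dvd_natCast.mpr hmb)
  refine ⟨glOfInt M Y hYdet, ?_, ?_⟩
  · ext1
    show ((glOfInt M Y hYdet : Matrix (Fin 2) (Fin 2) (ZMod M))).map
        (ZMod.castHom hpkM (ZMod (p * k))) = (x : Matrix (Fin 2) (Fin 2) (ZMod (p * k)))
    rw [glOfInt_val, mapcast_mapcast]
    rw [map_intCast_eq_of_modEq (fun i j => (hXY_pk i j).symm)]
    exact intLift_map _
  · ext1
    show ((glOfInt M Y hYdet : Matrix (Fin 2) (Fin 2) (ZMod M))).map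
        (ZMod.castHom hmM (ZMod m)) = (1 : Matrix (Fin 2) (Fin 2) (ZMod m))
    rw [glOfInt_val, mapcast_mapcast]
    rw [map_intCast_eq_of_modEq hY1m]
    exact Matrix.map_one _ Int.cast_zero Int.cast_one

end Lift

-- matrix-level version
lemma intLiftM_one_modEq {d n : ℕ} [NeZero n] (hdn : d ∣ n)
    (A : Matrix (Fin 2) (Fin 2) (ZMod n))
    (hA : A.map (ZMod.castHom hdn (ZMod d)) = 1) :
    ∀ i j, intLift A i j
      ≡ (1 : Matrix (Fin 2) (Fin 2) ℤ) i j [ZMOD (d : ℤ)] := by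
  intro i j
  rw [← ZMod.intCast_eq_intCast_iff]
  have h2 := congrFun (congrFun hA i) j
  simp only [Matrix.map_apply] at h2
  have h3 : (((A i j).val : ℤ) : ZMod d) = ZMod.castHom hdn (ZMod d) (A i j) := by
    simp [ZMod.castHom_apply, ZMod.natCast_val]
  rw [show (intLift A i j : ℤ) = ((A i j).val : ℤ) from rfl, h3, h2]
  fin_cases i <;> fin_cases j <;> simp [Matrix.one_apply]

lemma zmod_inj {a b : ℕ} [NeZero a] [NeZero b] (hab : Nat.Coprime a b)
    {z w : ZMod (a * b)}
    (h1 : (z.val : ZMod a) = (w.val : ZMod a))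
    (h2 : (z.val : ZMod b) = (w.val : ZMod b)) : z = w := by
  haveI : NeZero (a * b) := ⟨Nat.mul_ne_zero (NeZero.ne a) (NeZero.ne b)⟩
  rw [ZMod.natCast_eq_natCast_iff] at h1 h2
  have := (Nat.modEq_and_modEq_iff_modEq_mul hab).mp ⟨h1, h2⟩
  calc z = (z.val : ZMod (a * b)) := (ZMod.natCast_zmod_val z).symm
    _ = (w.val : ZMod (a * b)) := by rw [ZMod.natCast_eq_natCast_iff]; exact this
    _ = w := ZMod.natCast_zmod_val w

-- the J ≃ Fin p equivalence
noncomputable def JEquiv (p k : ℕ) (hp : 0 < p) (hk : 0 < k) :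
    {z : ZMod (p * k) // ZMod.castHom (dvd_mul_left k p) (ZMod k) z = 0} ≃ Fin p := by
  haveI : NeZero (p * k) := ⟨Nat.mul_ne_zero hp.ne' hk.ne'⟩
  haveI : NeZero k := ⟨hk.ne'⟩
  refine Equiv.ofBijective (fun z => ⟨z.1.val / k, ?_⟩) ⟨?_, ?_⟩
  · have h1 : z.1.val < p * k := ZMod.val_lt z.1
    exact Nat.div_lt_of_lt_mul (lt_of_lt_of_eq h1 (Nat.mul_comm p k))
  · rintro ⟨z, hz⟩ ⟨w, hw⟩ h
    simp only [Fin.mk.injEq] at h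
    have hzk : k ∣ z.val := by
      have : (z.val : ZMod k) = 0 := by
        rw [← hz]; simp [ZMod.castHom_apply, ZMod.natCast_val]
      rwa [ZMod.natCast_eq_zero_iff] at this
    have hwk : k ∣ w.val := by
      have : (w.val : ZMod k) = 0 := by
        rw [← hw]; simp [ZMod.castHom_apply, ZMod.natCast_val]
      rwa [ZMod.natCast_eq_zero_iff] at this
    have : z.val = w.val := by
      rw [← Nat.div_mul_cancel hzk, ← Nat.div_mul_cancel hwk, h]
    apply Subtype.ext
    calc z = (z.val : ZMod (p*k)) := (ZMod.natCast_zmod_val z).symm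
      _ = (w.val : ZMod (p*k)) := by rw [this]
      _ = w := ZMod.natCast_zmod_val w
  · intro j
    refine ⟨⟨((j.1 * k : ℕ) : ZMod (p * k)), ?_⟩, ?_⟩
    · rw [show (((j.1 * k : ℕ) : ZMod (p*k))) = ((j.1 * k : ℕ) : ZMod (p*k)) from rfl]
      rw [map_natCast]
      rw [ZMod.natCast_eq_zero_iff]
      exact dvd_mul_left k j.1
    · have hlt : j.1 * k < p * k := by
        exact (Nat.mul_lt_mul_right hk).mpr j.2
      apply Fin.ext
      simp only
      rw [ZMod.val_natCast_of_lt hlt]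
      exact Nat.mul_div_cancel_left j.1 hk |>.symm ▸ by rw [Nat.mul_div_cancel _ hk]

lemma card_ker_of_dvd (p k : ℕ) (hp : p.Prime) (hk : 0 < k) (hpk : p ∣ k) :
    Nat.card (Matrix.GeneralLinearGroup.map (n := Fin 2)
      (ZMod.castHom (dvd_mul_left k p) (ZMod k))).ker = p ^ 4 := by
  haveI : NeZero k := ⟨hk.ne'⟩
  haveI : NeZero (p * k) := ⟨Nat.mul_ne_zero hp.pos.ne' hk.ne'⟩
  set f := ZMod.castHom (dvd_mul_left k p) (ZMod k) with hf
  set J := {z : ZMod (p * k) // f z = 0} with hJ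
  -- the map of one
  have hmapone : (1 : Matrix (Fin 2) (Fin 2) (ZMod (p * k))).map f = 1 :=
    Matrix.map_one _ (map_zero f) (map_one f)
  -- the equivalence
  have hker : ∀ z : (Matrix.GeneralLinearGroup.map (n := Fin 2) f).ker,
      ((z : GL (Fin 2) (ZMod (p * k))) : Matrix (Fin 2) (Fin 2) (ZMod (p * k))).map f = 1 := by
    rintro ⟨z, hz⟩
    exact congrArg Units.val (MonoidHom.mem_ker.mp hz)
  let E : (Matrix.GeneralLinearGroup.map (n := Fin 2) f).ker ≃ (Fin 2 → Fin 2 → J) :=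
  { toFun := fun z => fun i j =>
      ⟨(((z : GL (Fin 2) (ZMod (p * k))) : Matrix (Fin 2) (Fin 2) (ZMod (p * k))) - 1) i j, by
        have h1 := hker z
        have : (((z : GL (Fin 2) (ZMod (p * k))) : Matrix (Fin 2) (Fin 2) (ZMod (p * k))) - 1).map f
            = (((z : GL (Fin 2) (ZMod (p * k))) : Matrix (Fin 2) (Fin 2) (ZMod (p * k)))).map f
              - (1 : Matrix (Fin 2) (Fin 2) (ZMod (p * k))).map f := by
          ext i' j'
          simp [Matrix.map_apply, Matrix.sub_apply, Matrix.one_apply, apply_ite f]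
        have h2 := congrFun (congrFun this i) j
        simp only [Matrix.map_apply] at h2
        rw [h2]
        rw [h1, hmapone]
        simp⟩,
    invFun := fun B => by
      set A : Matrix (Fin 2) (Fin 2) (ZMod (p * k)) :=
        1 + Matrix.of (fun i j => (B i j : ZMod (p * k))) with hA
      have hAmap : A.map f = 1 := by
        ext i j
        simp only [hA, Matrix.map_apply, Matrix.add_apply, Matrix.of_apply, map_add]
        rw [(B i j).2, add_zero]
        have := congrFun (congrFun hmapone i) j
        simpa [Matrix.map_apply] using this
      have hX1 := intLiftM_one_modEq (dvd_mul_left k p) A hAmap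
      have hdet : IsCoprime (intLift A).det ((p * k : ℕ) : ℤ) := by
        have h1 : IsCoprime (intLift A).det (k : ℤ) := by
          refine coprime_of_modEq (detCongr (X := 1) (Y := intLift A)
            (fun i j => (hX1 i j).symm)) ?_
          simpa using isCoprime_one_left (x := (k : ℤ))
        have h2 : IsCoprime (intLift A).det (p : ℤ) :=
          h1.of_isCoprime_of_dvd_right (Int.natCast_dvd_natCast.mpr hpk)
        push_cast
        exact h2.mul_right h1
      exact ⟨glOfInt (p * k) (intLift A) hdet, by
        rw [MonoidHom.mem_ker]
        ext1
        show ((glOfInt (p * k) (intLift A) hdet :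
          Matrix (Fin 2) (Fin 2) (ZMod (p * k)))).map f = 1
        rw [glOfInt_val, intLift_map]
        exact hAmap⟩,
    left_inv := by
      intro z
      apply Subtype.ext
      apply Units.ext
      simp only [glOfInt_val, intLift_map]
      ext i j
      simp,
    right_inv := by
      intro B
      funext i j
      apply Subtype.ext
      show ((_ : GL (Fin 2) (ZMod (p*k))).val - 1) i j = (B i j : ZMod (p * k))
      simp only [glOfInt_val, intLift_map]
      simp }
  rw [Nat.card_congr E]
  rw [Nat.card_fun, Nat.card_fun]
  rw [Nat.card_congr (JEquiv p k hp.pos hk)]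
  simp [Nat.card_eq_fintype_card]
  ring

lemma card_ker_of_not_dvd (p k : ℕ) (hp : p.Prime) (hk : 0 < k) (hpk : ¬ p ∣ k) :
    Nat.card (Matrix.GeneralLinearGroup.map (n := Fin 2)
      (ZMod.castHom (dvd_mul_left k p) (ZMod k))).ker = (p ^ 2 - 1) * (p ^ 2 - p) := by
  haveI : NeZero k := ⟨hk.ne'⟩
  haveI : NeZero p := ⟨hp.pos.ne'⟩
  haveI : NeZero (p * k) := ⟨Nat.mul_ne_zero hp.pos.ne' hk.ne'⟩
  haveI : Fact p.Prime := ⟨hp⟩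
  have hcop : Nat.Coprime p k := (Nat.Prime.coprime_iff_not_dvd hp).mpr hpk
  set f := ZMod.castHom (dvd_mul_left k p) (ZMod k) with hf
  set r := ZMod.castHom (Dvd.intro k rfl : p ∣ p * k) (ZMod p) with hr
  have hmapone : (1 : Matrix (Fin 2) (Fin 2) (ZMod (p * k))).map f = 1 :=
    Matrix.map_one _ (map_zero f) (map_one f)
  have hbij : Function.Bijective (fun z : (Matrix.GeneralLinearGroup.map (n := Fin 2) f).ker =>
      Matrix.GeneralLinearGroup.map (n := Fin 2) r (z : GL (Fin 2) (ZMod (p * k)))) := by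
    constructor
    · rintro ⟨z, hz⟩ ⟨w, hw⟩ h
      simp only at h
      apply Subtype.ext
      apply Units.ext
      ext i j
      have hzm : (z : Matrix (Fin 2) (Fin 2) (ZMod (p * k))).map f = 1 :=
        congrArg Units.val (MonoidHom.mem_ker.mp hz)
      have hwm : (w : Matrix (Fin 2) (Fin 2) (ZMod (p * k))).map f = 1 :=
        congrArg Units.val (MonoidHom.mem_ker.mp hw)
      have hk' : f ((z : Matrix (Fin 2) (Fin 2) (ZMod (p * k))) i j)
          = f ((w : Matrix (Fin 2) (Fin 2) (ZMod (p * k))) i j) := by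
        have h1 := congrFun (congrFun hzm i) j
        have h2 := congrFun (congrFun hwm i) j
        simp only [Matrix.map_apply] at h1 h2
        rw [h1, h2]
      have hp' : r ((z : Matrix (Fin 2) (Fin 2) (ZMod (p * k))) i j)
          = r ((w : Matrix (Fin 2) (Fin 2) (ZMod (p * k))) i j) := by
        have := congrArg Units.val h
        have h2 := congrFun (congrFun this i) j
        simpa [Matrix.map_apply] using h2
      refine zmod_inj hcop ?_ ?_
      · simpa [hr, ZMod.castHom_apply, ZMod.natCast_val] using hp'
      · simpa [hf, ZMod.castHom_apply, ZMod.natCast_val] using hk'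
    · intro y
      set X := intLift (y : Matrix (Fin 2) (Fin 2) (ZMod p)) with hX
      obtain ⟨Y, hYX, hY1, hYdet⟩ := crtMat p k (Nat.Coprime.isCoprime hcop) X
        (intLift_det_coprime y)
      have hxker : (glOfInt (p * k) Y hYdet) ∈
          (Matrix.GeneralLinearGroup.map (n := Fin 2) f).ker := by
        rw [MonoidHom.mem_ker]
        ext1
        show ((glOfInt (p * k) Y hYdet : Matrix (Fin 2) (Fin 2) (ZMod (p * k)))).map f = 1
        rw [glOfInt_val, hf, mapcast_mapcast,
          map_intCast_eq_of_modEq (fun i j => (hY1 i j).symm)]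
        exact Matrix.map_one _ Int.cast_zero Int.cast_one
      refine ⟨⟨glOfInt (p * k) Y hYdet, hxker⟩, ?_⟩
      simp only
      ext1
      show ((glOfInt (p * k) Y hYdet : Matrix (Fin 2) (Fin 2) (ZMod (p * k)))).map r
          = (y : Matrix (Fin 2) (Fin 2) (ZMod p))
      rw [glOfInt_val, hr, mapcast_mapcast,
        map_intCast_eq_of_modEq (fun i j => (hYX i j).symm), hX, intLift_map]
  rw [Nat.card_congr (Equiv.ofBijective _ hbij)]
  rw [Matrix.card_GL_field]
  simp [Fin.prod_univ_two, ZMod.card]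


/-- Let `m ∣ M`, `p` prime with `p·k ∣ M` and `v_p(k) ≥ v_p(m)`, and let
`H ≤ GL₂(ℤ/Mℤ)` contain the kernel of reduction modulo `m`.  Then the order of the image
of `H` modulo `pk` equals the order of its image modulo `k`, multiplied by `p⁴` when
`p ∣ k` and by `(p² − 1)(p² − p)` when `p ∤ k`. -/
theorem stmt5 (M m k p : ℕ) (hM : 0 < M) (hm : 0 < m) (hk : 0 < k)
    (hp : p.Prime) (hmM : m ∣ M) (hpkM : p * k ∣ M)
    (hval : padicValNat p m ≤ padicValNat p k)
    (H : Subgroup (GL (Fin 2) (ZMod M)))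
    (hH : (Matrix.GeneralLinearGroup.map (n := Fin 2)
            (ZMod.castHom hmM (ZMod m))).ker ≤ H) :
    Nat.card (Subgroup.map (Matrix.GeneralLinearGroup.map (n := Fin 2)
        (ZMod.castHom hpkM (ZMod (p * k)))) H)
      = Nat.card (Subgroup.map (Matrix.GeneralLinearGroup.map (n := Fin 2)
          (ZMod.castHom ((dvd_mul_left k p).trans hpkM) (ZMod k))) H) *
        (if p ∣ k then p ^ 4 else (p ^ 2 - 1) * (p ^ 2 - p)) := by

  haveI : NeZero M := ⟨hM.ne'⟩
  haveI : NeZero m := ⟨hm.ne'⟩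
  haveI : NeZero k := ⟨hk.ne'⟩
  have hpk : 0 < p * k := Nat.pos_of_dvd_of_pos hpkM hM
  haveI : NeZero (p * k) := ⟨hpk.ne'⟩
  set f1 := Matrix.GeneralLinearGroup.map (n := Fin 2) (ZMod.castHom hpkM (ZMod (p * k))) with hf1
  set g := Matrix.GeneralLinearGroup.map (n := Fin 2)
    (ZMod.castHom (dvd_mul_left k p) (ZMod k)) with hg
  have hcomp : Subgroup.map (Matrix.GeneralLinearGroup.map (n := Fin 2)
      (ZMod.castHom ((dvd_mul_left k p).trans hpkM) (ZMod k))) H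
      = Subgroup.map g (Subgroup.map f1 H) := by
    rw [Subgroup.map_map]
    have : g.comp f1 = Matrix.GeneralLinearGroup.map (n := Fin 2)
        (ZMod.castHom ((dvd_mul_left k p).trans hpkM) (ZMod k)) := by
      rw [hg, hf1, ← Matrix.GeneralLinearGroup.map_comp, ZMod.castHom_comp]
    rw [this]
  have hker_le : g.ker ≤ Subgroup.map f1 H := by
    intro x hx
    obtain ⟨y, hy1, hy2⟩ := lift_mod M m k p hM hm hk hp hmM hpkM hval x
      (MonoidHom.mem_ker.mp hx)
    exact ⟨y, hH (MonoidHom.mem_ker.mpr hy2), hy1⟩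
  have hcard := card_map_mul_card_ker g (Subgroup.map f1 H) hker_le
  rw [hcomp, hcard]
  congr 1
  by_cases hdvd : p ∣ k
  · rw [if_pos hdvd, hg, card_ker_of_dvd p k hp hk hdvd]
  · rw [if_neg hdvd, hg, card_ker_of_not_dvd p k hp hk hdvd]
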